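/- Suppose a, b, c ∈ ℂ and μ is a complex Borel measure on ℝ such that μ({1}) = 0, the total variation measure |μ| is compactly supported, and a + b·n + c·n² + ∫_ℝ Q_n(x) dμ(x) = 0 for every n ∈ ℤ₊. Then a = b = c = 0 and μ = 0. -/

import Mathlib

open MeasureTheory Filter Topology

noncomputable section

/-- The polynomial `Q_n`: `Q_n(x) = 0` for `n = 0, 1` and
`Q_n(x) = ∑_{j=0}^{n-2} (n - j - 1) x^j` for `n ≥ 2`. -/
def Qpoly (n : ℕ) (x : ℝ) : ℝ :=
  ∑ j ∈ Finset.range (n - 1), ((n : ℝ) - (j : ℝ) - 1) * x ^ j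

/-- The integral of a real function against a (real) signed measure, via the Jordan
decomposition. -/
def signedIntegral (s : SignedMeasure ℝ) (f : ℝ → ℝ) : ℝ :=
  (∫ x, f x ∂s.toJordanDecomposition.posPart) - ∫ x, f x ∂s.toJordanDecomposition.negPart

/-- The integral of a real function against a complex Borel measure. -/
def complexIntegral (μ : ComplexMeasure ℝ) (f : ℝ → ℝ) : ℂ :=
  (signedIntegral (ComplexMeasure.re μ) f : ℂ) +
    (signedIntegral (ComplexMeasure.im μ) f : ℂ) * Complex.I

open scoped NNReal ENNReal

lemma Qstep (n : ℕ) (x : ℝ) :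
    Qpoly (n + 1) x = Qpoly n x + ∑ j ∈ Finset.range n, x ^ j := by
  cases n with
  | zero => simp [Qpoly]
  | succ m =>
    unfold Qpoly
    simp only [Nat.add_sub_cancel]
    rw [Finset.sum_range_succ, Finset.sum_range_succ (f := fun j => x ^ j)]
    push_cast
    have h : ∑ j ∈ Finset.range m, ((m:ℝ) + 1 + 1 - (j:ℝ) - 1) * x ^ j
        = ∑ j ∈ Finset.range m, (((m:ℝ) + 1 - (j:ℝ) - 1) * x ^ j + x ^ j) :=
      Finset.sum_congr rfl (fun j _ => by ring)
    rw [h, Finset.sum_add_distrib]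
    ring

lemma Qcont (n : ℕ) : Continuous (Qpoly n) := by
  unfold Qpoly
  exact continuous_finset_sum _ (fun j _ => by fun_prop)

lemma integrable_cont {ν : Measure ℝ} [IsFiniteMeasure ν] {R : ℝ}
    (hν : ν (Set.Icc (-R) R)ᶜ = 0) {f : ℝ → ℝ} (hf : Continuous f) :
    Integrable f ν := by
  have hmem : ∀ᵐ x ∂ν, x ∈ Set.Icc (-R) R := by
    rw [MeasureTheory.ae_iff]
    exact hν
  rw [← Measure.restrict_eq_self_of_ae_mem hmem]
  exact ContinuousOn.integrableOn_compact isCompact_Icc hf.continuousOn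

lemma poly_integral_eq {p q : Measure ℝ} [IsFiniteMeasure p] [IsFiniteMeasure q] {R : ℝ}
    (hp : p (Set.Icc (-R) R)ᶜ = 0) (hq : q (Set.Icc (-R) R)ᶜ = 0)
    (hm : ∀ n : ℕ, ∫ x, x ^ n ∂p = ∫ x, x ^ n ∂q) (P : Polynomial ℝ) :
    ∫ x, P.eval x ∂p = ∫ x, P.eval x ∂q := by
  induction P using Polynomial.induction_on' with
  | add f g hf hg =>
      simp only [Polynomial.eval_add]
      rw [integral_add (integrable_cont hp f.continuous) (integrable_cont hp g.continuous),
        integral_add (integrable_cont hq f.continuous) (integrable_cont hq g.continuous),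
        hf, hg]
  | monomial n a =>
      simp only [Polynomial.eval_monomial]
      rw [integral_const_mul, integral_const_mul, hm n]

lemma cont_integral_eq {p q : Measure ℝ} [IsFiniteMeasure p] [IsFiniteMeasure q] {R : ℝ}
    (hp : p (Set.Icc (-R) R)ᶜ = 0) (hq : q (Set.Icc (-R) R)ᶜ = 0)
    (hm : ∀ n : ℕ, ∫ x, x ^ n ∂p = ∫ x, x ^ n ∂q) {f : ℝ → ℝ} (hf : Continuous f) :
    ∫ x, f x ∂p = ∫ x, f x ∂q := by
  set I := Set.Icc (-R) R with hI
  set C : ℝ := (p Set.univ).toReal + (q Set.univ).toReal + 1 with hC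
  have hCpos : 0 < C := by positivity
  have key : ∀ ε : ℝ, 0 < ε → |(∫ x, f x ∂p) - ∫ x, f x ∂q| ≤ ε * C := by
    intro ε hε
    have hmem : (ContinuousMap.restrict I ⟨f, hf⟩ : C(I, ℝ)) ∈
        closure (polynomialFunctions I : Set C(I, ℝ)) := by
      rw [← Subalgebra.topologicalClosure_coe]
      show _ ∈ ((polynomialFunctions (Set.Icc (-R) R)).topologicalClosure :
        Set C((Set.Icc (-R) R : Set ℝ), ℝ))
      rw [polynomialFunctions_closure_eq_top (-R) R]
      trivial
    obtain ⟨g, hgmem, hgdist⟩ := Metric.mem_closure_iff.mp hmem ε hε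
    rw [polynomialFunctions_coe] at hgmem
    obtain ⟨P, rfl⟩ := hgmem
    have hbound : ∀ x ∈ I, |f x - P.eval x| ≤ ε := by
      intro x hx
      have h1 : dist ((ContinuousMap.restrict I ⟨f, hf⟩ : C(I, ℝ)) ⟨x, hx⟩)
          ((Polynomial.toContinuousMapOnAlgHom I P) ⟨x, hx⟩) ≤ dist
          (ContinuousMap.restrict I ⟨f, hf⟩ : C(I, ℝ)) (Polynomial.toContinuousMapOnAlgHom I P) :=
        ContinuousMap.dist_apply_le_dist _
      refine le_trans (le_of_eq ?_) (h1.trans hgdist.le)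
      simp [Real.dist_eq, ContinuousMap.restrict, Polynomial.toContinuousMapOn,
        Polynomial.toContinuousMapOnAlgHom, Polynomial.toContinuousMap]
    have est : ∀ (ν : Measure ℝ), ∀ _ : IsFiniteMeasure ν, ν Iᶜ = 0 →
        |(∫ x, f x ∂ν) - ∫ x, P.eval x ∂ν| ≤ ε * (ν Set.univ).toReal := by
      intro ν hfin hν
      have hmemae : ∀ᵐ x ∂ν, x ∈ I := by
        rw [MeasureTheory.ae_iff]; exact hν
      rw [← integral_sub (integrable_cont hν hf) (integrable_cont hν P.continuous)]
      have hres : (∫ x, (f x - P.eval x) ∂ν) = ∫ x in I, (f x - P.eval x) ∂ν := by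
        conv_lhs => rw [← Measure.restrict_eq_self_of_ae_mem hmemae]
      rw [hres]
      calc |∫ x in I, (f x - P.eval x) ∂ν| ≤ ε * (ν I).toReal := by
            rw [← Real.norm_eq_abs]
            apply norm_setIntegral_le_of_norm_le_const (measure_lt_top ν I)
            · intro x hx
              simpa [Real.norm_eq_abs] using hbound x hx
        _ ≤ ε * (ν Set.univ).toReal :=
            mul_le_mul_of_nonneg_left (ENNReal.toReal_mono (measure_ne_top ν _)
              (measure_mono (Set.subset_univ I))) hε.le
    have hPP := poly_integral_eq hp hq hm P
    have e1 := est p inferInstance hp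
    have e2 := est q inferInstance hq
    calc |(∫ x, f x ∂p) - ∫ x, f x ∂q|
        ≤ |(∫ x, f x ∂p) - ∫ x, P.eval x ∂p| + |(∫ x, P.eval x ∂q) - ∫ x, f x ∂q| := by
          rw [hPP]; exact abs_sub_le _ _ _ |>.trans (by rw [abs_sub_comm (∫ x, P.eval x ∂q)])
      _ ≤ ε * (p Set.univ).toReal + ε * (q Set.univ).toReal := by
          rw [abs_sub_comm (∫ x, P.eval x ∂q)]; exact add_le_add e1 e2
      _ ≤ ε * C := by rw [hC]; nlinarith
  have : |(∫ x, f x ∂p) - ∫ x, f x ∂q| ≤ 0 := by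
    refine le_of_forall_pos_le_add ?_
    intro δ hδ
    have := key (δ / C) (by positivity)
    rw [div_mul_cancel₀ _ (ne_of_gt hCpos)] at this
    linarith
  have := abs_nonpos_iff.mp this
  linarith [sub_eq_zero.mp this, (sub_eq_zero.mp this).ge]

lemma momentEq {p q : Measure ℝ} [IsFiniteMeasure p] [IsFiniteMeasure q] {R : ℝ}
    (hp : p (Set.Icc (-R) R)ᶜ = 0) (hq : q (Set.Icc (-R) R)ᶜ = 0)
    (hm : ∀ n : ℕ, ∫ x, x ^ n ∂p = ∫ x, x ^ n ∂q) : p = q := by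
  apply ext_of_forall_lintegral_eq_of_IsFiniteMeasure
  intro f
  have hcoe : Continuous fun x => ((f x : ℝ≥0) : ℝ) := NNReal.continuous_coe.comp f.continuous
  have h1 : ∀ ν : Measure ℝ, ∀ _ : IsFiniteMeasure ν, ν (Set.Icc (-R) R)ᶜ = 0 →
      ∫⁻ x, (f x : ℝ≥0∞) ∂ν = ENNReal.ofReal (∫ x, ((f x : ℝ≥0) : ℝ) ∂ν) := by
    intro ν hfin hν
    rw [MeasureTheory.ofReal_integral_eq_lintegral_ofReal (integrable_cont hν hcoe)
      (Filter.Eventually.of_forall fun x => NNReal.coe_nonneg _)]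
    simp [ENNReal.ofReal_coe_nnreal]
  rw [h1 p inferInstance hp, h1 q inferInstance hq, cont_integral_eq hp hq hm hcoe]

lemma dirac_decomp {p q : Measure ℝ} [IsFiniteMeasure p] [IsFiniteMeasure q] {R : ℝ}
    (hR : 1 ≤ R) (hp : p (Set.Icc (-R) R)ᶜ = 0) (hq : q (Set.Icc (-R) R)ᶜ = 0)
    {r : ℝ} (hr : 0 ≤ r)
    (hm : ∀ n : ℕ, ∫ x, x ^ n ∂p = (∫ x, x ^ n ∂q) + r) :
    p = q + r.toNNReal • Measure.dirac 1 := by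
  have h1I : (1:ℝ) ∈ Set.Icc (-R) R := by constructor <;> linarith
  have hd0 : (r.toNNReal • Measure.dirac (1:ℝ)) (Set.Icc (-R) R)ᶜ = 0 := by
    rw [Measure.smul_apply, Measure.dirac_apply' _ measurableSet_Icc.compl]
    simp [h1I]
  have hq' : (q + r.toNNReal • Measure.dirac (1:ℝ)) ((Set.Icc (-R) R)ᶜ) = 0 := by
    rw [Measure.add_apply, hq, hd0, add_zero]
  refine momentEq hp hq' ?_
  intro n
  have hi1 : Integrable (fun x : ℝ => x ^ n) q := integrable_cont hq (by fun_prop)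
  have hi2 : Integrable (fun x : ℝ => x ^ n) (r.toNNReal • Measure.dirac (1:ℝ)) :=
    integrable_cont hd0 (by fun_prop)
  rw [hm n, integral_add_measure hi1 hi2, integral_smul_nnreal_measure,
    integral_dirac (fun x : ℝ => x ^ n) 1]
  simp [NNReal.smul_def, Real.coe_toNNReal r hr]

lemma real_case {p q : Measure ℝ} [IsFiniteMeasure p] [IsFiniteMeasure q] {R : ℝ}
    (hR : 1 ≤ R) (hp : p (Set.Icc (-R) R)ᶜ = 0) (hq : q (Set.Icc (-R) R)ᶜ = 0)
    (h1 : p {1} = q {1}) (α β γ : ℝ)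
    (H : ∀ n : ℕ, α + β * n + γ * n ^ 2 + ((∫ x, Qpoly n x ∂p) - ∫ x, Qpoly n x ∂q) = 0) :
    α = 0 ∧ β = 0 ∧ γ = 0 ∧ p = q := by
  have key : ∀ (ν : Measure ℝ) (_ : IsFiniteMeasure ν), ν (Set.Icc (-R) R)ᶜ = 0 → ∀ n : ℕ,
      (∫ x, Qpoly (n+2) x ∂ν) + ∫ x, Qpoly n x ∂ν
        = 2 * (∫ x, Qpoly (n+1) x ∂ν) + ∫ x, x ^ n ∂ν := by
    intro ν hfin hν n
    have hptw : (fun x : ℝ => Qpoly (n+2) x + Qpoly n x)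
        = fun x : ℝ => 2 * Qpoly (n+1) x + x ^ n := by
      funext x
      have e1 := Qstep (n+1) x
      have e2 := Qstep n x
      rw [Finset.sum_range_succ] at e1
      have : n + 1 + 1 = n + 2 := rfl
      rw [this] at e1
      linarith
    have h2 : ∫ x, (Qpoly (n+2) x + Qpoly n x) ∂ν
        = ∫ x, (2 * Qpoly (n+1) x + x ^ n) ∂ν := by rw [hptw]
    rwa [integral_add (integrable_cont hν (Qcont _)) (integrable_cont hν (Qcont _)),
      integral_add ((integrable_cont hν (Qcont (n+1))).const_mul 2)
        (integrable_cont hν (by fun_prop)), integral_const_mul] at h2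
  have M : ∀ n : ℕ, ∫ x, x ^ n ∂p = (∫ x, x ^ n ∂q) + (-2 * γ) := by
    intro n
    have h0 := H n
    have h1' := H (n+1)
    have h2 := H (n+2)
    have k1 := key p inferInstance hp n
    have k2 := key q inferInstance hq n
    push_cast at h0 h1' h2
    linear_combination k2 - k1 + h2 - 2*h1' + h0
  have hdone : γ = 0 ∧ p = q := by
    by_cases hγ : γ ≤ 0
    · have hd := dirac_decomp hR hp hq (r := -2*γ) (by linarith) M
      have he : p {1} = q {1} + ((-2*γ).toNNReal • Measure.dirac (1:ℝ)) {1} := by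
        rw [hd, Measure.add_apply]
      rw [Measure.smul_apply, Measure.dirac_apply' _ (measurableSet_singleton 1)] at he
      simp only [Set.indicator_of_mem (Set.mem_singleton (1:ℝ)), Pi.one_apply, smul_eq_mul,
        mul_one] at he
      rw [h1] at he
      have he2 : q {1} + 0 = q {1} + (-2*γ).toNNReal • (1:ℝ≥0∞) := by
        rw [add_zero]; exact he
      have he3 := ((ENNReal.add_right_inj (measure_ne_top q _)).mp he2).symm
      have hz : (-2*γ).toNNReal = 0 := by
        simpa [ENNReal.smul_def] using he3
      have hγ0 : γ = 0 := by
        have := Real.toNNReal_eq_zero.mp hz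
        linarith
      refine ⟨hγ0, ?_⟩
      rw [hd, hγ0]
      simp
    · exfalso
      push_neg at hγ
      have M' : ∀ n : ℕ, ∫ x, x ^ n ∂q = (∫ x, x ^ n ∂p) + (2*γ) := by
        intro n; have := M n; linarith
      have hd := dirac_decomp hR hq hp (r := 2*γ) (by linarith) M'
      have he : q {1} = p {1} + ((2*γ).toNNReal • Measure.dirac (1:ℝ)) {1} := by
        rw [hd, Measure.add_apply]
      rw [Measure.smul_apply, Measure.dirac_apply' _ (measurableSet_singleton 1)] at he
      simp only [Set.indicator_of_mem (Set.mem_singleton (1:ℝ)), Pi.one_apply, smul_eq_mul,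
        mul_one] at he
      rw [← h1] at he
      have he2 : p {1} + 0 = p {1} + (2*γ).toNNReal • (1:ℝ≥0∞) := by
        rw [add_zero]; exact he
      have he3 := ((ENNReal.add_right_inj (measure_ne_top p _)).mp he2).symm
      have hz : (2*γ).toNNReal = 0 := by simpa [ENNReal.smul_def] using he3
      have := Real.toNNReal_eq_zero.mp hz
      linarith
  obtain ⟨hγ0, hpq⟩ := hdone
  have H0 := H 0
  have H1 := H 1
  rw [hpq] at H0 H1
  simp [hγ0] at H0 H1
  refine ⟨by linarith, by linarith, hγ0, hpq⟩

lemma signed_part (s : SignedMeasure ℝ) {I : Set ℝ} (hI : MeasurableSet I)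
    (hs : ∀ Δ : Set ℝ, MeasurableSet Δ → Δ ⊆ Iᶜ → s Δ = 0) :
    s.toJordanDecomposition.posPart Iᶜ = 0 ∧ s.toJordanDecomposition.negPart Iᶜ = 0 := by
  obtain ⟨i, hi₁, hi₂, hi₃, hpos, hneg⟩ := s.toJordanDecomposition_spec
  constructor
  · rw [hpos, SignedMeasure.toMeasureOfZeroLE_apply _ hi₂ hi₁ hI.compl]
    have h0 : s (i ∩ Iᶜ) = 0 := hs _ (hi₁.inter hI.compl) Set.inter_subset_right
    simp [h0]
  · rw [hneg, SignedMeasure.toMeasureOfLEZero_apply _ hi₃ hi₁.compl hI.compl]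
    have h0 : s (iᶜ ∩ Iᶜ) = 0 := hs _ (hi₁.compl.inter hI.compl) Set.inter_subset_right
    simp [h0]

lemma signed_apply_eq (s : SignedMeasure ℝ) {A : Set ℝ} (hA : MeasurableSet A) :
    s A = (s.toJordanDecomposition.posPart A).toReal
      - (s.toJordanDecomposition.negPart A).toReal := by
  conv_lhs => rw [← s.toSignedMeasure_toJordanDecomposition]
  rw [JordanDecomposition.toSignedMeasure, VectorMeasure.sub_apply,
    Measure.toSignedMeasure_apply_measurable hA, Measure.toSignedMeasure_apply_measurable hA]
  rfl

lemma process (R : ℝ) (hR1 : (1:ℝ) ≤ R) (s : SignedMeasure ℝ) (α β γ : ℝ)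
    (hsI : ∀ Δ : Set ℝ, MeasurableSet Δ → Δ ⊆ (Set.Icc (-R) R)ᶜ → s Δ = 0)
    (hs1 : s {1} = 0)
    (hsH : ∀ n : ℕ, α + β * n + γ * n ^ 2 + signedIntegral s (Qpoly n) = 0) :
    α = 0 ∧ β = 0 ∧ γ = 0 ∧ s = 0 := by
  obtain ⟨hp0, hq0⟩ := signed_part s measurableSet_Icc hsI
  have h1 : s.toJordanDecomposition.posPart {1} = s.toJordanDecomposition.negPart {1} := by
    have := signed_apply_eq s (measurableSet_singleton 1)
    rw [hs1] at this
    have h2 : (s.toJordanDecomposition.posPart {1}).toReal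
        = (s.toJordanDecomposition.negPart {1}).toReal := by linarith
    exact (ENNReal.toReal_eq_toReal_iff' (measure_ne_top _ _) (measure_ne_top _ _)).mp h2
  obtain ⟨hα, hβ, hγ, hpq⟩ := real_case hR1 hp0 hq0 h1 α β γ hsH
  refine ⟨hα, hβ, hγ, ?_⟩
  apply VectorMeasure.ext
  intro A hA
  rw [signed_apply_eq s hA, hpq, VectorMeasure.zero_apply, sub_self]


/-- If `a, b, c ∈ ℂ` and `μ` is a complex Borel measure on `ℝ` with `μ({1}) = 0`, whose total
variation is compactly supported (i.e. `μ` vanishes on all measurable subsets of the complement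
of some compact set), and `a + b n + c n² + ∫ Q_n dμ = 0` for every `n ∈ ℤ₊`, then
`a = b = c = 0` and `μ = 0`. -/
theorem complexMeasure_Qpoly_uniqueness (a b c : ℂ) (μ : ComplexMeasure ℝ)
    (hone : μ ({1} : Set ℝ) = 0)
    (hcomp : ∃ K : Set ℝ, IsCompact K ∧ ∀ Δ : Set ℝ, MeasurableSet Δ → Δ ⊆ Kᶜ → μ Δ = 0)
    (heq : ∀ n : ℕ, a + b * (n : ℂ) + c * (n : ℂ) ^ 2 + complexIntegral μ (Qpoly n) = 0) :
    a = 0 ∧ b = 0 ∧ c = 0 ∧ μ = 0 := by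
  obtain ⟨K, hK, hKnull⟩ := hcomp
  obtain ⟨r, hr⟩ := hK.isBounded.subset_closedBall 0
  set R : ℝ := max r 1 with hRdef
  have hR1 : (1:ℝ) ≤ R := le_max_right r 1
  have hKI : K ⊆ Set.Icc (-R) R := by
    intro x hx
    have hx1 := hr hx
    rw [Metric.mem_closedBall, Real.dist_eq, sub_zero] at hx1
    have h1 : |x| ≤ R := hx1.trans (le_max_left r 1)
    exact ⟨(abs_le.mp h1).1, (abs_le.mp h1).2⟩
  have hμI : ∀ Δ : Set ℝ, MeasurableSet Δ → Δ ⊆ (Set.Icc (-R) R)ᶜ → μ Δ = 0 :=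
    fun Δ h hsub => hKnull Δ h (hsub.trans (Set.compl_subset_compl.mpr hKI))
  have hre := process R hR1 (ComplexMeasure.re μ) a.re b.re c.re
    (fun Δ h hsub => by
      show (μ Δ).re = 0
      rw [hμI Δ h hsub, Complex.zero_re])
    (by show (μ {1}).re = 0
        rw [hone, Complex.zero_re])
    (fun n => by
      have h := congrArg Complex.re (heq n)
      simp only [complexIntegral, Complex.add_re, Complex.mul_re, Complex.natCast_re,
        Complex.natCast_im, Complex.ofReal_re, Complex.ofReal_im, Complex.I_re, Complex.I_im,
        Complex.zero_re, pow_two, Complex.mul_im] at h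
      ring_nf at h ⊢
      linarith)
  have him := process R hR1 (ComplexMeasure.im μ) a.im b.im c.im
    (fun Δ h hsub => by
      show (μ Δ).im = 0
      rw [hμI Δ h hsub, Complex.zero_im])
    (by show (μ {1}).im = 0
        rw [hone, Complex.zero_im])
    (fun n => by
      have h := congrArg Complex.im (heq n)
      simp only [complexIntegral, Complex.add_im, Complex.mul_im, Complex.natCast_re,
        Complex.natCast_im, Complex.ofReal_re, Complex.ofReal_im, Complex.I_re, Complex.I_im,
        Complex.zero_im, pow_two, Complex.mul_re] at h
      ring_nf at h ⊢
      linarith)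
  obtain ⟨ha1, hb1, hc1, hres⟩ := hre
  obtain ⟨ha2, hb2, hc2, hims⟩ := him
  refine ⟨Complex.ext ha1 ha2, Complex.ext hb1 hb2, Complex.ext hc1 hc2, ?_⟩
  apply VectorMeasure.ext
  intro A hA
  rw [VectorMeasure.zero_apply]
  apply Complex.ext
  · have h0 : ComplexMeasure.re μ A = 0 := by rw [hres, VectorMeasure.zero_apply]
    have h0' : (μ A).re = 0 := h0
    rw [h0', Complex.zero_re]
  · have h0 : ComplexMeasure.im μ A = 0 := by rw [hims, VectorMeasure.zero_apply]
    have h0' : (μ A).im = 0 := h0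
    rw [h0', Complex.zero_im]

end
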